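/- Fix α > 0, and for r > 0 and x ∈ ℂ define I_r(x) := ∫_{−π}^{π} r / |r·e^{iθ} − x|^{2+α} dθ. Then there exists a constant a > 1, depending only on α, such that for all r > 0 and all x ∈ ℂ with |x| < r, a^{−1}·(r − |x|)^{−1−α} ≤ I_r(x) ≤ a·(r − |x|)^{−1−α}. -/

import Mathlib

/-- `I_r(x) = ∫_{−π}^{π} r/|r·e^{iθ} − x|^{2+α} dθ`. -/
noncomputable def Icirc (α : ℝ) (r : ℝ) (x : ℂ) : ℝ :=
  ∫ θ in (-Real.pi)..Real.pi,
    r / ‖(r : ℂ) * Complex.exp ((θ : ℂ) * Complex.I) - x‖ ^ (2 + α)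

open Real MeasureTheory intervalIntegral

lemma sqAbs (r t θ : ℝ) :
    ‖(r:ℂ) * Complex.exp ((θ:ℂ) * Complex.I) - (t:ℂ)‖ ^ 2
      = (r - t)^2 + 4*r*t*Real.sin (θ/2)^2 := by
  have h1 : Real.sin (θ/2)^2 = 1/2 - Real.cos (2*(θ/2))/2 := Real.sin_sq_eq_half_sub (θ/2)
  have h2 : Real.sin θ^2 + Real.cos θ^2 = 1 := Real.sin_sq_add_cos_sq θ
  rw [Complex.sq_norm, Complex.normSq_apply]
  simp [Complex.sub_re, Complex.sub_im, Complex.mul_re, Complex.mul_im,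
    Complex.exp_ofReal_mul_I_re, Complex.exp_ofReal_mul_I_im]
  have h3 : (2:ℝ)*(θ/2) = θ := by ring
  rw [h3] at h1
  linear_combination r^2 * h2 - 4*r*t*h1

lemma sin_half_sq_ge {θ : ℝ} (h : |θ| ≤ π) : θ^2 ≤ π^2 * Real.sin (θ/2)^2 := by
  have hs : Real.sin (|θ|/2) ^ 2 = Real.sin (θ/2)^2 := by
    rcases abs_cases θ with ⟨h1,_⟩|⟨h1,_⟩ <;> rw [h1]
    simp [neg_div, Real.sin_neg]
  have hj : 2/π * (|θ|/2) ≤ Real.sin (|θ|/2) := Real.mul_le_sin (by positivity) (by linarith)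
  have h0 : (0:ℝ) ≤ 2/π * (|θ|/2) := by positivity
  have hsq := mul_self_le_mul_self h0 hj
  have hpi : (0:ℝ) < π := Real.pi_pos
  have he : 2/π * (|θ|/2) * (2/π * (|θ|/2)) = θ^2/π^2 := by
    field_simp
    nlinarith [sq_abs θ]
  rw [he] at hsq
  calc θ^2 = θ^2/π^2 * π^2 := by field_simp
    _ ≤ Real.sin (|θ|/2) * Real.sin (|θ|/2) * π^2 := by nlinarith [sq_nonneg π]
    _ = π^2 * Real.sin (θ/2)^2 := by rw [← hs]; ring

lemma q_bounds (r t θ : ℝ) (hr : 0 < r) (ht : 0 ≤ t) (htr : t < r) (hθ : |θ| ≤ π) :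
    (r - t) + r*|θ| ≤ Real.sqrt (2+8*π^2) *
        ‖(r:ℂ) * Complex.exp ((θ:ℂ) * Complex.I) - (t:ℂ)‖ ∧
      ‖(r:ℂ) * Complex.exp ((θ:ℂ) * Complex.I) - (t:ℂ)‖ ≤ (r - t) + r*|θ| := by
  set q := ‖(r:ℂ) * Complex.exp ((θ:ℂ) * Complex.I) - (t:ℂ)‖ with hq
  have hq0 : 0 ≤ q := norm_nonneg _
  have hq2 : q^2 = (r - t)^2 + 4*r*t*Real.sin (θ/2)^2 := sqAbs r t θ
  have hpi : (0:ℝ) < π := Real.pi_pos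
  have habs2 : |θ|^2 = θ^2 := sq_abs θ
  have hd0 : 0 < r - t := by linarith
  have hb0 : 0 ≤ (r - t) + r*|θ| := by positivity
  constructor
  · -- lower bound on q
    have key : ((r - t) + r*|θ|)^2 ≤ (2+8*π^2) * q^2 := by
      rw [hq2]
      have hθsq : θ^2 ≤ π^2 := by
        nlinarith [mul_self_le_mul_self (abs_nonneg θ) hθ, sq_abs θ]
      rcases le_or_gt t (r/2) with hc | hc
      · have h4d : r^2 ≤ 4*(r-t)^2 := by nlinarith
        have h7 : r^2*θ^2 ≤ 4*(r-t)^2*π^2 :=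
          mul_le_mul h4d hθsq (sq_nonneg θ) (by positivity)
        nlinarith [sq_nonneg ((r-t) - r*|θ|), habs2, h7,
          mul_nonneg (mul_nonneg (mul_nonneg hr.le ht) (sq_nonneg (Real.sin (θ/2)))) (sq_nonneg π),
          mul_nonneg (mul_nonneg hr.le ht) (sq_nonneg (Real.sin (θ/2)))]
      · have hj2 := sin_half_sq_ge hθ
        have h5 : 2*(r^2*θ^2) ≤ π^2*(4*r*t*Real.sin (θ/2)^2) := by
          have h6 : 4*r*t*θ^2 ≤ 4*r*t*(π^2*Real.sin (θ/2)^2) :=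
            mul_le_mul_of_nonneg_left hj2 (by positivity)
          have h4 : 2*r^2 ≤ 4*r*t := by nlinarith
          have h8 := mul_le_mul_of_nonneg_right h4 (sq_nonneg θ)
          linarith [h6, h8]
        nlinarith [sq_nonneg ((r-t) - r*|θ|), habs2, h5,
          mul_nonneg (mul_nonneg (mul_nonneg hr.le ht) (sq_nonneg (Real.sin (θ/2)))) (sq_nonneg π),
          mul_nonneg (mul_nonneg hr.le ht) (sq_nonneg (Real.sin (θ/2))),
          sq_nonneg (π*(r-t))]
    have hsqrt := Real.sqrt_le_sqrt key
    rw [Real.sqrt_sq hb0, Real.sqrt_mul (by positivity) (q^2), Real.sqrt_sq hq0] at hsqrt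
    exact hsqrt
  · have key : q^2 ≤ ((r - t) + r*|θ|)^2 := by
      rw [hq2]
      have hsin : Real.sin (θ/2)^2 ≤ (θ/2)^2 := Real.sin_sq_le_sq
      nlinarith [mul_nonneg (mul_nonneg hd0.le hr.le) (abs_nonneg θ), habs2,
        mul_le_mul_of_nonneg_left hsin (by positivity : (0:ℝ) ≤ 4*r*t),
        mul_le_mul_of_nonneg_right
          (mul_le_mul_of_nonneg_left htr.le hr.le : r*t ≤ r*r) (sq_nonneg θ)]
    calc q = Real.sqrt (q^2) := (Real.sqrt_sq hq0).symm
      _ ≤ Real.sqrt (((r - t) + r*|θ|)^2) := Real.sqrt_le_sqrt key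
      _ = (r - t) + r*|θ| := Real.sqrt_sq hb0

lemma Icirc_rotate (α r : ℝ) (x : ℂ) :
    Icirc α r x = Icirc α r ((‖x‖ : ℝ) : ℂ) := by
  set f : ℝ → ℝ :=
    fun θ => r / ‖(r:ℂ) * Complex.exp ((θ:ℂ) * Complex.I) - x‖ ^ (2+α) with hf
  have hper : Function.Periodic f (2*π) := by
    intro θ
    simp only [hf]
    congr 3
    push_cast
    rw [add_mul, Complex.exp_add]
    simp [Complex.exp_two_pi_mul_I]
  have key : ∀ θ : ℝ,
      r / ‖(r:ℂ) * Complex.exp ((θ:ℂ) * Complex.I)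
        - ((‖x‖ : ℝ):ℂ)‖ ^ (2+α) = f (θ + x.arg) := by
    intro θ
    simp only [hf]
    have heq : (r:ℂ) * Complex.exp (((θ + x.arg : ℝ):ℂ) * Complex.I) - x
        = Complex.exp (((x.arg:ℝ):ℂ) * Complex.I)
          * ((r:ℂ) * Complex.exp ((θ:ℂ)*Complex.I) - ((‖x‖ : ℝ):ℂ)) := by
      rw [mul_sub]
      congr 1
      · push_cast
        rw [add_mul, Complex.exp_add]
        ring
      · rw [mul_comm]
        exact (Complex.norm_mul_exp_arg_mul_I x).symm
    rw [heq, norm_mul, Complex.norm_exp_ofReal_mul_I, one_mul]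
  have h1 : Icirc α r ((‖x‖ : ℝ) : ℂ) = ∫ θ in (-π)..π, f (θ + x.arg) := by
    unfold Icirc
    exact intervalIntegral.integral_congr (fun θ _ => key θ)
  rw [h1, intervalIntegral.integral_comp_add_right f x.arg]
  have h2 : ∫ θ in (-π + x.arg)..(π + x.arg), f θ = ∫ θ in (-π)..π, f θ := by
    have h3 := hper.intervalIntegral_add_eq (-π + x.arg) (-π)
    rw [show -π + x.arg + 2*π = π + x.arg by ring, show -π + 2*π = π by ring] at h3
    exact h3
  rw [h2]
  rfl

lemma J_eval (α d r : ℝ) (hα : 0 < α) (hd : 0 < d) (hr : 0 < r) :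
    ∫ θ in (0:ℝ)..π, r / (d + r*θ)^(2+α)
      = (1+α)⁻¹ * (d^(-(1+α)) - (d+r*π)^(-(1+α))) := by
  have hα1 : (1:ℝ)+α ≠ 0 := by positivity
  have hderiv : ∀ θ ∈ Set.uIcc (0:ℝ) π,
      HasDerivAt (fun θ : ℝ => -(1+α)⁻¹ * (d + r*θ)^(-(1+α)))
        (r / (d+r*θ)^(2+α)) θ := by
    intro θ hθ
    rw [Set.uIcc_of_le Real.pi_pos.le] at hθ
    have hθ0 : 0 ≤ θ := hθ.1
    have hpos : 0 < d + r*θ := by positivity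
    have h1 : HasDerivAt (fun θ : ℝ => d + r*θ) r θ := by
      simpa using ((hasDerivAt_id θ).const_mul r).const_add d
    have h2 := (Real.hasDerivAt_rpow_const (p := -(1+α)) (Or.inl hpos.ne')).comp θ h1
    have h3 := h2.const_mul (-(1+α)⁻¹)
    refine h3.congr_deriv ?_
    rw [show (-(1+α)-1 : ℝ) = -(2+α) by ring]
    rw [Real.rpow_neg hpos.le]
    field_simp
  have hint : IntervalIntegrable (fun θ : ℝ => r / (d+r*θ)^(2+α)) volume 0 π := by
    apply ContinuousOn.intervalIntegrable
    apply ContinuousOn.div continuousOn_const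
    · exact ((continuousOn_const.add (continuousOn_const.mul continuousOn_id)).rpow_const
        (fun x _ => Or.inr (by positivity)))
    · intro θ hθ
      rw [Set.uIcc_of_le Real.pi_pos.le] at hθ
      have hpos : 0 < d + r*θ := by have := hθ.1; positivity
      exact ne_of_gt (Real.rpow_pos_of_pos hpos _)
  rw [intervalIntegral.integral_eq_sub_of_hasDerivAt hderiv hint]
  simp only [mul_zero, add_zero]
  ring

lemma Jfull (α d r : ℝ) (hα : 0 < α) (hd : 0 < d) (hr : 0 < r) :
    ∫ θ in (-π)..π, r / (d + r*|θ|)^(2+α)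
      = 2 * ((1+α)⁻¹ * (d^(-(1+α)) - (d+r*π)^(-(1+α)))) := by
  set g : ℝ → ℝ := fun θ => r / (d + r*|θ|)^(2+α) with hg
  have hgc : Continuous g := by
    apply Continuous.div continuous_const
    · exact ((continuous_const.add (continuous_const.mul continuous_abs)).rpow_const
        (fun x => Or.inr (by positivity)))
    · intro θ
      have hpos : 0 < d + r*|θ| := by positivity
      exact ne_of_gt (Real.rpow_pos_of_pos hpos _)
  have hsplit : ∫ θ in (-π)..π, g θ = (∫ θ in (-π)..(0:ℝ), g θ) + ∫ θ in (0:ℝ)..π, g θ :=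
    (intervalIntegral.integral_add_adjacent_intervals
      (hgc.intervalIntegrable _ _) (hgc.intervalIntegrable _ _)).symm
  have hneg : ∫ θ in (-π)..(0:ℝ), g θ = ∫ θ in (0:ℝ)..π, g θ := by
    calc ∫ θ in (-π)..(0:ℝ), g θ = ∫ θ in (-π).. -(0:ℝ), g θ := by norm_num
      _ = ∫ θ in (0:ℝ)..π, g (-θ) := (intervalIntegral.integral_comp_neg g).symm
      _ = ∫ θ in (0:ℝ)..π, g θ := by
          apply intervalIntegral.integral_congr
          intro θ _
          simp [hg, abs_neg]
  have hpos_part : ∫ θ in (0:ℝ)..π, g θ = ∫ θ in (0:ℝ)..π, r / (d + r*θ)^(2+α) := by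
    apply intervalIntegral.integral_congr
    intro θ hθ
    rw [Set.uIcc_of_le Real.pi_pos.le] at hθ
    simp only [hg]
    rw [abs_of_nonneg hθ.1]
  rw [hsplit, hneg, hpos_part, J_eval α d r hα hd hr]
  ring

lemma Icirc_real_bounds (α : ℝ) (hα : 0 < α) (r t : ℝ) (hr : 0 < r) (ht : 0 ≤ t)
    (htr : t < r) :
    (2*π/((1+α)*(1+π))) * (r - t)^(-(1+α)) ≤ Icirc α r ((t:ℝ):ℂ) ∧
    Icirc α r ((t:ℝ):ℂ) ≤ Real.sqrt (2+8*π^2)^(2+α) * (2*(1+α)⁻¹) * (r - t)^(-(1+α)) := by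
  have hπ : (0:ℝ) < π := Real.pi_pos
  set d : ℝ := r - t with hd
  have hd0 : 0 < d := by simp [hd]; linarith
  set c : ℝ := Real.sqrt (2+8*π^2) with hc
  have hc0 : 0 < c := Real.sqrt_pos.mpr (by positivity)
  set f : ℝ → ℝ :=
    fun θ => r / ‖(r:ℂ) * Complex.exp ((θ:ℂ) * Complex.I) - (t:ℂ)‖ ^ (2+α) with hf
  set g : ℝ → ℝ := fun θ => r / (d + r*|θ|)^(2+α) with hg
  -- positivity of the modulus
  have habs_pos : ∀ θ : ℝ,
      0 < ‖(r:ℂ) * Complex.exp ((θ:ℂ) * Complex.I) - (t:ℂ)‖ := by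
    intro θ
    rcases (norm_nonneg ((r:ℂ) * Complex.exp ((θ:ℂ) * Complex.I) - (t:ℂ))).lt_or_eq
      with h|h
    · exact h
    · exfalso
      have h2 := sqAbs r t θ
      rw [← h] at h2
      nlinarith [mul_nonneg (mul_nonneg hr.le ht) (sq_nonneg (Real.sin (θ/2)))]
  -- continuity and integrability
  have hc0' : Continuous fun θ:ℝ => (r:ℂ) * Complex.exp ((θ:ℂ) * Complex.I) - (t:ℂ) := by
    fun_prop
  have hfc : Continuous f := by
    apply Continuous.div continuous_const
    · exact (continuous_norm.comp hc0').rpow_const (fun x => Or.inr (by positivity))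
    · exact fun θ => ne_of_gt (Real.rpow_pos_of_pos (habs_pos θ) _)
  have hgc : Continuous g := by
    apply Continuous.div continuous_const
    · exact ((continuous_const.add (continuous_const.mul continuous_abs)).rpow_const
        (fun x => Or.inr (by positivity)))
    · intro θ
      have hpos : 0 < d + r*|θ| := by positivity
      exact ne_of_gt (Real.rpow_pos_of_pos hpos _)
  -- pointwise bounds
  have hpt : ∀ θ ∈ Set.Icc (-π) π, g θ ≤ f θ ∧ f θ ≤ c^(2+α) * g θ := by
    intro θ hθ
    have hθabs : |θ| ≤ π := abs_le.mpr ⟨hθ.1, hθ.2⟩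
    obtain ⟨hql, hqu⟩ := q_bounds r t θ hr ht htr hθabs
    set q : ℝ := ‖(r:ℂ) * Complex.exp ((θ:ℂ) * Complex.I) - (t:ℂ)‖ with hq
    have hq0 : 0 < q := habs_pos θ
    have hb0 : 0 < d + r*|θ| := by positivity
    constructor
    · apply div_le_div_of_nonneg_left hr.le (Real.rpow_pos_of_pos hq0 _)
      exact Real.rpow_le_rpow hq0.le hqu (by positivity)
    · show r / q^(2+α) ≤ c^(2+α) * (r / (d + r*|θ|)^(2+α))
      rw [← mul_div_assoc,
        div_le_div_iff₀ (Real.rpow_pos_of_pos hq0 _) (Real.rpow_pos_of_pos hb0 _)]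
      calc r * (d + r*|θ|)^(2+α) ≤ r * ((c*q)^(2+α)) := by
            apply mul_le_mul_of_nonneg_left _ hr.le
            exact Real.rpow_le_rpow hb0.le hql (by positivity)
        _ = c^(2+α) * r * q^(2+α) := by
            rw [Real.mul_rpow hc0.le hq0.le]; ring
  -- integral comparison
  have hIcirc : Icirc α r ((t:ℝ):ℂ) = ∫ θ in (-π)..π, f θ := rfl
  have hJ : (∫ θ in (-π)..π, g θ)
      = 2 * ((1+α)⁻¹ * (d^(-(1+α)) - (d+r*π)^(-(1+α)))) := Jfull α d r hα hd0 hr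
  have hIJ1 : (∫ θ in (-π)..π, g θ) ≤ ∫ θ in (-π)..π, f θ :=
    intervalIntegral.integral_mono_on (by linarith) (hgc.intervalIntegrable _ _)
      (hfc.intervalIntegrable _ _) (fun θ hθ => (hpt θ hθ).1)
  have hIJ2 : (∫ θ in (-π)..π, f θ) ≤ c^(2+α) * ∫ θ in (-π)..π, g θ := by
    rw [← intervalIntegral.integral_const_mul]
    exact intervalIntegral.integral_mono_on (by linarith) (hfc.intervalIntegrable _ _)
      ((continuous_const.mul hgc).intervalIntegrable _ _) (fun θ hθ => (hpt θ hθ).2)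
  -- bounds on J
  set A : ℝ := d^(-(1+α)) with hA
  set B : ℝ := (d+r*π)^(-(1+α)) with hB
  have hA0 : 0 ≤ A := Real.rpow_nonneg hd0.le _
  have hB0 : 0 ≤ B := Real.rpow_nonneg (by positivity) _
  have hBA : B ≤ (1+π)⁻¹ * A := by
    have hd_le_r : d ≤ r := by rw [hd]; linarith
    have hbase : (1+π)*d ≤ d + r*π := by nlinarith
    have hpow : ((1+π)*d)^((1:ℝ)+α) ≤ (d+r*π)^((1:ℝ)+α) :=
      Real.rpow_le_rpow (by positivity) hbase (by positivity)
    have h1 : B ≤ ((1+π)*d)^(-(1+α)) := by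
      rw [hB, Real.rpow_neg (by positivity), Real.rpow_neg (by positivity)]
      exact inv_anti₀ (Real.rpow_pos_of_pos (by positivity) _) hpow
    have h2 : ((1+π)*d)^(-(1+α)) = (1+π)^(-(1+α)) * A := by
      rw [hA, Real.mul_rpow (by positivity) hd0.le]
    have h3 : (1+π)^(-(1+α)) ≤ (1+π)⁻¹ := by
      have h4 := Real.rpow_le_rpow_of_exponent_le (by linarith : (1:ℝ) ≤ 1+π)
        (by linarith : -(1+α) ≤ -1)
      rwa [Real.rpow_neg_one] at h4
    calc B ≤ (1+π)^(-(1+α)) * A := by rw [← h2]; exact h1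
      _ ≤ (1+π)⁻¹ * A := mul_le_mul_of_nonneg_right h3 hA0
  have hJ_le : (∫ θ in (-π)..π, g θ) ≤ 2*(1+α)⁻¹ * A := by
    rw [hJ]
    have : (0:ℝ) ≤ (1+α)⁻¹ := by positivity
    nlinarith
  have hJ_ge : (2*π/((1+α)*(1+π))) * A ≤ ∫ θ in (-π)..π, g θ := by
    rw [hJ]
    have hkey : (π/(1+π)) * A ≤ A - B := by
      have he : (π/(1+π))*A = A - (1+π)⁻¹*A := by field_simp; ring
      linarith
    have h2 := mul_le_mul_of_nonneg_left hkey
      (show (0:ℝ) ≤ 2*(1+α)⁻¹ by positivity)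
    calc (2*π/((1+α)*(1+π))) * A = 2*(1+α)⁻¹ * ((π/(1+π))*A) := by
          field_simp
      _ ≤ 2*(1+α)⁻¹ * (A - B) := h2
      _ = 2 * ((1+α)⁻¹ * (A - B)) := by ring
  constructor
  · calc (2*π/((1+α)*(1+π))) * (r-t)^(-(1+α)) = (2*π/((1+α)*(1+π))) * A := rfl
      _ ≤ ∫ θ in (-π)..π, g θ := hJ_ge
      _ ≤ ∫ θ in (-π)..π, f θ := hIJ1
      _ = Icirc α r ((t:ℝ):ℂ) := hIcirc.symm
  · calc Icirc α r ((t:ℝ):ℂ) = ∫ θ in (-π)..π, f θ := hIcirc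
      _ ≤ c^(2+α) * ∫ θ in (-π)..π, g θ := hIJ2
      _ ≤ c^(2+α) * (2*(1+α)⁻¹ * A) := by
          apply mul_le_mul_of_nonneg_left hJ_le (by positivity)
      _ = c^(2+α) * (2*(1+α)⁻¹) * (r-t)^(-(1+α)) := by rw [hA]; ring

/-- two-sided bounds on `I_r(x)` for `|x| < r`. -/
theorem Icirc_bounds_inside (α : ℝ) (hα : 0 < α) :
    ∃ a : ℝ, 1 < a ∧ ∀ r : ℝ, 0 < r → ∀ x : ℂ, ‖x‖ < r →
      a⁻¹ * (r - ‖x‖) ^ (-(1 + α)) ≤ Icirc α r x ∧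
      Icirc α r x ≤ a * (r - ‖x‖) ^ (-(1 + α)) := by
  have hπ : (0:ℝ) < π := Real.pi_pos
  set c : ℝ := Real.sqrt (2+8*π^2) with hc
  have hc0 : 0 < c := Real.sqrt_pos.mpr (by positivity)
  set C1 : ℝ := (1+α)*(1+π)/(2*π) with hC1
  set C2 : ℝ := c^(2+α) * (2*(1+α)⁻¹) with hC2
  have hC1pos : 0 < C1 := by positivity
  have hC2pos : 0 < C2 := by positivity
  refine ⟨C1 + C2 + 1, by linarith, ?_⟩
  intro r hr x hx
  have ht : 0 ≤ ‖x‖ := norm_nonneg x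
  obtain ⟨hlow, hup⟩ := Icirc_real_bounds α hα r (‖x‖) hr ht hx
  rw [← Icirc_rotate] at hlow hup
  have hD0 : 0 ≤ (r - ‖x‖) ^ (-(1+α)) := Real.rpow_nonneg (by linarith) _
  constructor
  · have hainv : (C1 + C2 + 1)⁻¹ ≤ 2*π/((1+α)*(1+π)) := by
      have h1 : C1 ≤ C1 + C2 + 1 := by linarith
      have h2 := inv_anti₀ hC1pos h1
      calc (C1 + C2 + 1)⁻¹ ≤ C1⁻¹ := h2
        _ = 2*π/((1+α)*(1+π)) := by rw [hC1, inv_div]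
    calc (C1 + C2 + 1)⁻¹ * (r - ‖x‖) ^ (-(1+α))
        ≤ 2*π/((1+α)*(1+π)) * (r - ‖x‖) ^ (-(1+α)) :=
          mul_le_mul_of_nonneg_right hainv hD0
      _ ≤ Icirc α r x := hlow
  · calc Icirc α r x ≤ C2 * (r - ‖x‖) ^ (-(1+α)) := hup
      _ ≤ (C1 + C2 + 1) * (r - ‖x‖) ^ (-(1+α)) := by
          apply mul_le_mul_of_nonneg_right (by linarith) hD0
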